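/- The group of isomorphisms preserving a mode W that partitions the agents, with spectrum {k_i • m_i}_{1≤i≤l} (k_i modalities of cardinality m_i, with pairwise distinct m_i), is isomorphic to the direct product over i of the wreath products Sym(B^{m_i}) ≀ S_{k_i}; in particular its order is ∏_{i=1}^{l} (2^{m_i}!)^{k_i} · k_i!. -/

import Mathlib

set_option linter.unusedSectionVars false
set_option linter.unusedVariables false

/-- The automorphism group of a simple graph, as a subgroup of the permutations
of its vertices. -/
def graphAut {V : Type*} (G : SimpleGraph V) : Subgroup (Equiv.Perm V) where
  carrier := {π | ∀ a b, G.Adj (π a) (π b) ↔ G.Adj a b}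
  one_mem' := by intro a b; simp
  mul_mem' := by
    intro π σ hπ hσ a b
    exact (hπ (σ a) (σ b)).trans (hσ a b)
  inv_mem' := by
    intro π hπ a b
    simpa using (hπ (π⁻¹ a) (π⁻¹ b)).symm

/-- The complete modal graph of a mode `W`. -/
def KM {n : ℕ} (W : Finset (Finset (Fin n))) : SimpleGraph (Fin n → Bool) where
  Adj b1 b2 := ∃ w ∈ W, (∃ i ∈ w, b1 i ≠ b2 i) ∧ ∀ i ∉ w, b1 i = b2 i
  symm := by
    constructor
    rintro b1 b2 ⟨w, hw, ⟨i, hi, hne⟩, hout⟩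
    exact ⟨w, hw, ⟨i, hi, hne.symm⟩, fun j hj => (hout j hj).symm⟩
  loopless := by constructor; rintro b ⟨w, _, ⟨i, _, hne⟩, _⟩; exact hne rfl

/-- The action of `S_k` on `k`-tuples of elements of a group `G`, by permuting
the coordinates. -/
def permMulAut (G : Type*) [Group G] (k : ℕ) :
    Equiv.Perm (Fin k) →* MulAut (Fin k → G) where
  toFun π := { Equiv.arrowCongr π (Equiv.refl G) with map_mul' := fun _ _ => rfl }
  map_one' := by ext f i; rfl
  map_mul' := by intro π σ; ext f i; rfl

/-- The wreath product `G ≀ S_k`. -/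
def Wreath (G : Type*) [Group G] (k : ℕ) :=
  (Fin k → G) ⋊[permMulAut G k] Equiv.Perm (Fin k)

noncomputable instance (G : Type*) [Group G] (k : ℕ) : Group (Wreath G k) :=
  inferInstanceAs (Group ((Fin k → G) ⋊[permMulAut G k] Equiv.Perm (Fin k)))


lemma mem_graphAut {V : Type*} (G : SimpleGraph V) (p : Equiv.Perm V) :
    p ∈ graphAut G ↔ ∀ a b, G.Adj (p a) (p b) ↔ G.Adj a b := Iff.rfl

theorem Equiv.Perm.inv_apply_self {α : Type*} (f : Equiv.Perm α) (x : α) : f⁻¹ (f x) = x :=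
  f.symm_apply_apply x

theorem Equiv.Perm.apply_inv_self {α : Type*} (f : Equiv.Perm α) (x : α) : f (f⁻¹ x) = x :=
  f.apply_symm_apply x

namespace HamAux

variable {C : Type*} [DecidableEq C]
variable {A : C → Type*}

/-- The Hamming-type graph: adjacent iff they differ in exactly one coordinate. -/
def HG (A : C → Type*) : SimpleGraph (∀ c, A c) where
  Adj u v := ∃ c, u c ≠ v c ∧ ∀ d, d ≠ c → u d = v d
  symm := by
    constructor
    rintro u v ⟨c, h1, h2⟩
    exact ⟨c, fun he => h1 he.symm, fun d hd => (h2 d hd).symm⟩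
  loopless := by constructor; rintro u ⟨c, h1, _⟩; exact h1 rfl

/-- `v` lies on the line through `u` in direction `c`. -/
def inLine (u : ∀ c, A c) (c : C) (v : ∀ c, A c) : Prop :=
  v ≠ u ∧ ∀ d, d ≠ c → v d = u d

lemma inLine.ne_at {u c v} (h : inLine (A := A) u c v) : v c ≠ u c := by
  intro hc
  exact h.1 (funext fun d => by by_cases hd : d = c; · subst hd; exact hc
                                · exact h.2 d hd)

lemma inLine.symm {u c v} (h : inLine (A := A) u c v) : inLine v c u :=
  ⟨fun he => h.1 he.symm, fun d hd => (h.2 d hd).symm⟩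

lemma inLine.adj {u c v} (h : inLine (A := A) u c v) : (HG A).Adj u v :=
  ⟨c, fun he => h.ne_at he.symm, fun d hd => (h.2 d hd).symm⟩

lemma adj_line {u v} (h : (HG A).Adj u v) : ∃ c, inLine u c v := by
  obtain ⟨c, h1, h2⟩ := h
  exact ⟨c, fun he => h1 (he ▸ rfl), fun d hd => (h2 d hd).symm⟩

lemma line_unique {u c c' v} (h : inLine (A := A) u c v) (h' : inLine u c' v) :
    c = c' := by
  by_contra hne
  exact h.ne_at (h'.2 c fun hc => hne hc)

lemma line_adj {u c v v'} (h : inLine (A := A) u c v) (h' : inLine u c v')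
    (hne : v ≠ v') : (HG A).Adj v v' := by
  refine ⟨c, ?_, fun d hd => (h.2 d hd).trans (h'.2 d hd).symm⟩
  intro hc
  apply hne
  funext d
  by_cases hd : d = c
  · subst hd; exact hc
  · exact (h.2 d hd).trans (h'.2 d hd).symm

lemma line_disj {u c d v w} (h : inLine (A := A) u c v) (h' : inLine u d w)
    (hcd : c ≠ d) : ¬ (HG A).Adj v w ∧ v ≠ w := by
  have h1 : v c ≠ w c := fun he => h.ne_at (he.trans (h'.2 c hcd))
  have h2 : v d ≠ w d := fun he => h'.ne_at (((h.2 d (Ne.symm hcd)).symm.trans he).symm)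
  constructor
  · rintro ⟨e, he1, he2⟩
    by_cases hec : c = e
    · refine h2 (he2 d ?_)
      intro hde
      exact hcd (hec.trans hde.symm)
    · exact h1 (he2 c hec)
  · intro he; exact h1 (he ▸ rfl)

/-- The fourth-corner lemma. -/
lemma corner {q p r : ∀ c, A c} {a b : C} (hp : inLine q a p) (hr : inLine q b r)
    (hab : a ≠ b) {z : ∀ c, A c} (hzp : (HG A).Adj p z) (hzr : (HG A).Adj r z)
    (hzq : z ≠ q) : inLine r a z := by
  obtain ⟨a', hza⟩ := adj_line hzp
  obtain ⟨b', hzb⟩ := adj_line hzr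
  have hpra : p a ≠ r a := fun he => hp.ne_at (he.trans (hr.2 a hab))
  have hprb : p b ≠ r b := fun he => hr.ne_at (((hp.2 b (Ne.symm hab)).symm.trans he).symm)
  have hsub : ∀ d, d ≠ a' → d ≠ b' → p d = r d := fun d h1 h2 =>
    (hza.2 d h1).symm.trans (hzb.2 d h2)
  have ha : a = a' ∨ a = b' := by
    by_contra hc; push_neg at hc; exact hpra (hsub a hc.1 hc.2)
  have hb : b = a' ∨ b = b' := by
    by_contra hc; push_neg at hc; exact hprb (hsub b hc.1 hc.2)
  rcases ha with ha | ha <;> rcases hb with hb | hb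
  · exact absurd (ha.trans hb.symm) hab
  · -- a = a', b = b' : then z = q, contradiction
    exfalso
    subst ha; subst hb
    apply hzq
    funext d
    by_cases hda : d = a
    · subst hda
      rw [hzb.2 d (fun h => hab h), hr.2 d hab]
    · by_cases hdb : d = b
      · subst hdb
        rw [hza.2 d (fun h => hab h.symm), hp.2 d (Ne.symm hab)]
      · rw [hza.2 d hda, hp.2 d hda]
  · subst ha; exact hzb
  · exact absurd (hb.trans ha.symm) (Ne.symm hab)



variable {C : Type*} [DecidableEq C]
variable {A : C → Type*}

section Path

variable [∀ c, DecidableEq (A c)] [Fintype C]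

/-- Path induction: any two points differing only in coordinates in `S` are
related by `P`, provided `P` is closed under single updates in `S`. -/
lemma update_path {P : (∀ c, A c) → (∀ c, A c) → Prop} (S : C → Prop)
    (hrefl : ∀ v, P v v)
    (htrans : ∀ {u v w}, P u v → P v w → P u w)
    (hstep : ∀ (v : ∀ c, A c) (d : C) (y : A d), S d → P v (Function.update v d y)) :
    ∀ v v', (∀ d, v d ≠ v' d → S d) → P v v' := by
  suffices h : ∀ (N : ℕ) v v', (Finset.univ.filter (fun d => v d ≠ v' d)).card ≤ N →
      (∀ d, v d ≠ v' d → S d) → P v v' by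
    intro v v' hS
    exact h _ v v' le_rfl hS
  intro N
  induction N with
  | zero =>
    intro v v' hcard hS
    have : v = v' := by
      funext d
      by_contra hd
      have : d ∈ Finset.univ.filter (fun d => v d ≠ v' d) := by simp [hd]
      have := Finset.card_pos.mpr ⟨d, this⟩
      omega
    exact this ▸ hrefl v
  | succ N ih =>
    intro v v' hcard hS
    by_cases hvv : v = v'
    · exact hvv ▸ hrefl v
    · have : ∃ d, v d ≠ v' d := by
        by_contra hall
        push_neg at hall
        exact hvv (funext hall)
      obtain ⟨d, hd⟩ := this
      set v'' := Function.update v d (v' d) with hv''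
      have h1 : P v v'' := hstep v d (v' d) (hS d hd)
      have hsub : Finset.univ.filter (fun e => v'' e ≠ v' e) ⊆
          (Finset.univ.filter (fun e => v e ≠ v' e)).erase d := by
        intro e he
        simp only [Finset.mem_filter, Finset.mem_univ, true_and] at he
        have hed : e ≠ d := by
          intro h; subst h
          exact he (Function.update_self _ _ _)
        refine Finset.mem_erase.mpr ⟨hed, ?_⟩
        simp only [Finset.mem_filter, Finset.mem_univ, true_and]
        rw [hv''] at he
        rwa [Function.update_of_ne hed] at he
      have hdmem : d ∈ Finset.univ.filter (fun e => v e ≠ v' e) := by simp [hd]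
      have hcard' : (Finset.univ.filter (fun e => v'' e ≠ v' e)).card ≤ N := by
        have := Finset.card_le_card hsub
        have := Finset.card_erase_of_mem hdmem
        omega
      have h2 : P v'' v' := by
        refine ih v'' v' hcard' ?_
        intro e he
        by_cases hed : e = d
        · subst hed
          rw [hv''] at he
          exact absurd (Function.update_self _ _ _) he
        · rw [hv''] at he
          rw [Function.update_of_ne hed] at he
          exact hS e he
      exact htrans h1 h2

end Path

section Lines2

variable [∀ c, Fintype (A c)] [∀ c, DecidableEq (A c)]

lemma ntv_of_line {u c v} (h : inLine (A := A) u c v) : 1 < Fintype.card (A c) :=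
  Fintype.one_lt_card_iff_nontrivial.mpr ⟨⟨v c, u c, h.ne_at⟩⟩

lemma line_exists {c} (h : 1 < Fintype.card (A c)) (u : ∀ c, A c) :
    ∃ v, inLine (A := A) u c v := by
  obtain ⟨x, hx⟩ := Fintype.exists_ne_of_one_lt_card h (u c)
  refine ⟨Function.update u c x, ?_, fun d hd => Function.update_of_ne hd _ _⟩
  intro he
  exact hx (by simpa using congrFun he c)

end Lines2

section Pi

variable [Fintype C] [∀ c, Fintype (A c)] [∀ c, DecidableEq (A c)] [∀ c, Nonempty (A c)]

/-- Base point. -/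
noncomputable def u₀ : ∀ c, A c := fun _ => Classical.arbitrary _

/-- `π` is an automorphism of the Hamming graph. -/
abbrev Aut (π : Equiv.Perm (∀ c, A c)) : Prop :=
  ∀ a b, (HG A).Adj (π a) (π b) ↔ (HG A).Adj a b

lemma Aut.inv {π : Equiv.Perm (∀ c, A c)} (h : Aut π) : Aut π⁻¹ := by
  intro a b
  simpa using (h (π⁻¹ a) (π⁻¹ b)).symm

variable {π : Equiv.Perm (∀ c, A c)}

lemma image_line (hπ : Aut π) {u c v} (h : inLine (A := A) u c v) :
    ∃ c', inLine (π u) c' (π v) :=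
  adj_line ((hπ u v).mpr h.adj)

lemma coord_const (hπ : Aut π) {u c v1 v2 d1 d2}
    (h1 : inLine (A := A) u c v1) (h2 : inLine u c v2)
    (e1 : inLine (π u) d1 (π v1)) (e2 : inLine (π u) d2 (π v2)) : d1 = d2 := by
  by_cases hv : v1 = v2
  · subst hv; exact line_unique e1 e2
  · by_contra hne
    have hadj : (HG A).Adj v1 v2 := line_adj h1 h2 hv
    have : (HG A).Adj (π v1) (π v2) := (hπ v1 v2).mpr hadj
    exact (line_disj e1 e2 hne).1 this

/-- The direction at `u` to which `π` sends lines in direction `c`. -/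
noncomputable def sigma0 (hπ : Aut π) (u : ∀ c, A c) (c : C) : C :=
  if h : 1 < Fintype.card (A c) then
    Classical.choose (image_line hπ (Classical.choose_spec (line_exists h u)))
  else c

lemma sigma0_spec (hπ : Aut π) {u c v} (h : 1 < Fintype.card (A c))
    (hv : inLine (A := A) u c v) : inLine (π u) (sigma0 hπ u c) (π v) := by
  rw [sigma0, dif_pos h]
  have hv₀ := Classical.choose_spec (line_exists h u)
  have hs := Classical.choose_spec (image_line hπ hv₀)
  obtain ⟨d, hd⟩ := image_line hπ hv
  have := coord_const hπ hv₀ hv hs hd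
  exact this ▸ hd

lemma sigma0_edge (hπ : Aut π) {u u' : ∀ c, A c} (hadj : (HG A).Adj u u') {c}
    (h : 1 < Fintype.card (A c)) : sigma0 hπ u c = sigma0 hπ u' c := by
  obtain ⟨d, hd⟩ := adj_line hadj
  by_cases hcd : c = d
  · subst hcd
    have h1 : inLine (π u) (sigma0 hπ u c) (π u') := sigma0_spec hπ h hd
    have h2 : inLine (π u') (sigma0 hπ u' c) (π u) := sigma0_spec hπ h hd.symm
    exact line_unique h1 h2.symm
  · obtain ⟨v, hv⟩ := line_exists h u
    have hndv : d ≠ c := Ne.symm hcd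
    have hNd : 1 < Fintype.card (A d) := ntv_of_line hd
    set w := Function.update v d (u' d) with hw
    have hwc : w c = v c := Function.update_of_ne hcd _ _
    have hwd : w d = u' d := Function.update_self _ _ _
    have hwe : ∀ e, e ≠ c → e ≠ d → w e = u e := fun e hec hed => by
      rw [hw, Function.update_of_ne hed]
      exact hv.2 e hec
    have hvc : v c ≠ u c := hv.ne_at
    have hud : u' d ≠ u d := hd.ne_at
    have hw1 : inLine u' c w := by
      constructor
      · intro he
        apply hvc
        have := congrFun he c
        rw [hwc] at this
        rw [this, hd.2 c hcd]
      · intro e hec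
        by_cases hed : e = d
        · subst hed; exact hwd
        · rw [hwe e hec hed, hd.2 e hed]
    have hw2 : inLine v d w := by
      constructor
      · intro he
        apply hud
        have := congrFun he d
        rw [hwd] at this
        rw [this, hv.2 d hndv]
      · intro e hed
        exact Function.update_of_ne hed _ _
    have hwu : ¬ (HG A).Adj u w := by
      rintro ⟨e, he1, he2⟩
      by_cases hce : c = e
      · subst hce
        apply hud
        rw [← hwd]
        exact (he2 d (Ne.symm hcd)).symm ▸ (he2 d (Ne.symm hcd)).symm
      · apply hvc
        rw [← hwc]
        exact (he2 c hce).symm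
    have hwne : w ≠ u := by
      intro he
      apply hvc
      rw [← hwc, he]
    set a := sigma0 hπ u c with ha'
    set b := sigma0 hπ u d with hb'
    have ha : inLine (π u) a (π v) := sigma0_spec hπ h hv
    have hb : inLine (π u) b (π u') := sigma0_spec hπ hNd hd
    have hvu' := line_disj hv hd hcd
    have hab : a ≠ b := by
      intro he
      rw [he] at ha
      by_cases hpe : π v = π u'
      · exact hvu'.2 (π.injective hpe)
      · exact hvu'.1 ((hπ v u').mp (line_adj ha hb hpe))
    have hzp : (HG A).Adj (π v) (π w) := (hπ v w).mpr hw2.adj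
    have hzr : (HG A).Adj (π u') (π w) := (hπ u' w).mpr hw1.adj
    have hzq : π w ≠ π u := fun he => hwne (π.injective he)
    have hcor : inLine (π u') a (π w) := corner ha hb hab hzp hzr hzq
    have hw1' : inLine (π u') (sigma0 hπ u' c) (π w) := sigma0_spec hπ h hw1
    exact line_unique hcor.symm.symm hw1' |>.symm ▸ (line_unique hw1' hcor).symm

lemma sigma0_const (hπ : Aut π) {c} (h : 1 < Fintype.card (A c)) (u u' : ∀ c, A c) :
    sigma0 hπ u c = sigma0 hπ u' c := by
  refine update_path (P := fun x y => sigma0 hπ x c = sigma0 hπ y c) (fun _ => True)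
    (fun _ => rfl) (fun h1 h2 => h1.trans h2) ?_ u u' (fun _ _ => trivial)
  intro v d y _
  by_cases hy : y = v d
  · subst hy; rw [Function.update_eq_self]
  · have hline : inLine v d (Function.update v d y) := by
      constructor
      · intro he
        apply hy
        have := congrFun he d
        rwa [Function.update_self] at this
      · intro e hed; exact Function.update_of_ne hed _ _
    exact sigma0_edge hπ hline.adj h

/-- Global coordinate map induced by `π`. -/
noncomputable def sigmaFun (hπ : Aut π) (c : C) : C :=
  if 1 < Fintype.card (A c) then sigma0 hπ u₀ c else c

lemma line_maps (hπ : Aut π) {u c v} (h : 1 < Fintype.card (A c))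
    (hv : inLine (A := A) u c v) : inLine (π u) (sigmaFun hπ c) (π v) := by
  rw [sigmaFun, if_pos h, sigma0_const hπ h u₀ u]
  exact sigma0_spec hπ h hv

lemma ntv_sigma (hπ : Aut π) {c} (h : 1 < Fintype.card (A c)) :
    1 < Fintype.card (A (sigmaFun hπ c)) := by
  obtain ⟨v, hv⟩ := line_exists h (u₀ (A := A))
  exact ntv_of_line (line_maps hπ h hv)

lemma sigma_triv (hπ : Aut π) {c} (h : ¬ 1 < Fintype.card (A c)) :
    sigmaFun hπ c = c := if_neg h

lemma sigma_inj (hπ : Aut π) : Function.Injective (sigmaFun hπ) := by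
  intro c c' heq
  by_cases hc : 1 < Fintype.card (A c) <;> by_cases hc' : 1 < Fintype.card (A c')
  · by_contra hne
    obtain ⟨v, hv⟩ := line_exists hc (u₀ (A := A))
    obtain ⟨v', hv'⟩ := line_exists hc' (u₀ (A := A))
    have e1 := line_maps hπ hc hv
    have e2 := line_maps hπ hc' hv'
    rw [heq] at e1
    have hdisj := line_disj hv hv' hne
    by_cases hpe : π v = π v'
    · exact hdisj.2 (π.injective hpe)
    · exact hdisj.1 ((hπ v v').mp (line_adj e1 e2 hpe))
  · exact absurd (heq ▸ ntv_sigma hπ hc) ((sigma_triv hπ hc').symm ▸ hc')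
  · exact absurd (heq.symm ▸ ntv_sigma hπ hc') ((sigma_triv hπ hc).symm ▸ hc)
  · rw [sigma_triv hπ hc, sigma_triv hπ hc'] at heq
    exact heq

-- continue in section Pi

/-- The key claim: the value of `π v` at `sigmaFun c` only depends on `v c`. -/
lemma claim (hπ : Aut π) (c : C) (v : ∀ c, A c) :
    π v (sigmaFun hπ c) = π (Function.update u₀ c (v c)) (sigmaFun hπ c) := by
  by_cases hc : 1 < Fintype.card (A c)
  · refine update_path (P := fun x y => π x (sigmaFun hπ c) = π y (sigmaFun hπ c))
      (fun d => d ≠ c) (fun _ => rfl) (fun h1 h2 => h1.trans h2) ?_ v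
      (Function.update u₀ c (v c)) ?_
    · intro x d y hd
      by_cases hy : y = x d
      · subst hy; rw [Function.update_eq_self]
      · have hline : inLine x d (Function.update x d y) := by
          constructor
          · intro he
            apply hy
            have := congrFun he d
            rwa [Function.update_self] at this
          · intro e hed; exact Function.update_of_ne hed _ _
        have hNd : 1 < Fintype.card (A d) := ntv_of_line hline
        have := line_maps hπ hNd hline
        exact (this.2 (sigmaFun hπ c) (fun he => hd (sigma_inj hπ he.symm))).symm
    · intro d hdne
      intro hdc
      subst hdc
      exact hdne (Function.update_self _ _ _).symm
  · have hs : sigmaFun hπ c = c := sigma_triv hπ hc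
    haveI : Subsingleton (A c) := Fintype.card_le_one_iff_subsingleton.mp (not_lt.mp hc)
    rw [hs]
    exact Subsingleton.elim _ _

/-- The coordinate maps induced by `π`. -/
noncomputable def Ffun (hπ : Aut π) (c : C) : A c → A (sigmaFun hπ c) :=
  fun x => π (Function.update u₀ c x) (sigmaFun hπ c)

lemma claim' (hπ : Aut π) (v : ∀ c, A c) (c : C) :
    π v (sigmaFun hπ c) = Ffun hπ c (v c) := claim hπ c v

lemma Ffun_inj (hπ : Aut π) (c : C) : Function.Injective (Ffun hπ c) := by
  intro x x' hxx
  have hbij : Function.Bijective (sigmaFun hπ) :=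
    Finite.injective_iff_bijective.mp (sigma_inj hπ)
  have hpi : π (Function.update u₀ c x) = π (Function.update u₀ c x') := by
    funext d
    obtain ⟨e, rfl⟩ := hbij.2 d
    by_cases hec : e = c
    · subst hec
      have h1 := claim' hπ (Function.update u₀ e x) e
      have h2 := claim' hπ (Function.update u₀ e x') e
      rw [Function.update_self] at h1 h2
      rw [h1, h2, hxx]
    · have h1 := claim' hπ (Function.update u₀ c x) e
      have h2 := claim' hπ (Function.update u₀ c x') e
      rw [Function.update_of_ne hec] at h1 h2
      rw [h1, h2]
  have := π.injective hpi
  have := congrFun this c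
  rwa [Function.update_self, Function.update_self] at this

lemma sigma_inv_sigma (hπ : Aut π) (c : C) :
    sigmaFun (Aut.inv hπ) (sigmaFun hπ c) = c := by
  by_cases hc : 1 < Fintype.card (A c)
  · obtain ⟨v, hv⟩ := line_exists hc (u₀ (A := A))
    have h1 := line_maps hπ hc hv
    have h2 := line_maps (Aut.inv hπ) (ntv_sigma hπ hc) h1
    simp only [Equiv.Perm.inv_apply_self] at h2
    exact line_unique h2 hv
  · rw [sigma_triv hπ hc, sigma_triv (Aut.inv hπ) hc]

lemma card_sigma (hπ : Aut π) (c : C) :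
    Fintype.card (A (sigmaFun hπ c)) = Fintype.card (A c) := by
  have le1 : Fintype.card (A c) ≤ Fintype.card (A (sigmaFun hπ c)) :=
    Fintype.card_le_of_injective _ (Ffun_inj hπ c)
  have le2 : Fintype.card (A (sigmaFun hπ c)) ≤
      Fintype.card (A (sigmaFun (Aut.inv hπ) (sigmaFun hπ c))) :=
    Fintype.card_le_of_injective _ (Ffun_inj (Aut.inv hπ) (sigmaFun hπ c))
  rw [sigma_inv_sigma hπ c] at le2
  omega

lemma Ffun_bij (hπ : Aut π) (c : C) : Function.Bijective (Ffun hπ c) :=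
  (Fintype.bijective_iff_injective_and_card _).mpr ⟨Ffun_inj hπ c, (card_sigma hπ c).symm⟩

/-- The permutation of coordinates induced by `π`. -/
noncomputable def sigmaPerm (hπ : Aut π) : Equiv.Perm C :=
  Equiv.ofBijective _ (Finite.injective_iff_bijective.mp (sigma_inj hπ))

/-- Main abstract decomposition theorem for automorphisms of Hamming graphs. -/
theorem decomp (hπ : Aut π) :
    ∃ (σ : Equiv.Perm C) (F : ∀ c, A c ≃ A (σ c)),
      ∀ (v : ∀ c, A c) (c : C), π v (σ c) = F c (v c) :=
  ⟨sigmaPerm hπ, fun c => Equiv.ofBijective _ (Ffun_bij hπ c), fun v c => claim' hπ v c⟩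

end Pi

end HamAux
namespace SpecAux

open HamAux

variable {l : ℕ} (k m : Fin l → ℕ)

/-- Coordinate set. -/
abbrev CT := Σ i : Fin l, Fin (k i)

/-- Alphabets. -/
abbrev AT : CT k → Type := fun c => Fin (m c.1) → Bool

/-- Action of the product of wreath products on vertices. -/
def psiFun (g : ∀ i, Wreath (Equiv.Perm (Fin (m i) → Bool)) (k i))
    (v : ∀ c : CT k, AT k m c) : ∀ c : CT k, AT k m c :=
  fun c => (g c.1).left c.2 (v ⟨c.1, ((g c.1).right)⁻¹ c.2⟩)

lemma psiFun_one (v : ∀ c : CT k, AT k m c) : psiFun k m 1 v = v := rfl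

lemma psiFun_mul (g g' : ∀ i, Wreath (Equiv.Perm (Fin (m i) → Bool)) (k i))
    (v : ∀ c : CT k, AT k m c) :
    psiFun k m (g * g') v = psiFun k m g (psiFun k m g' v) := rfl

/-- The action as a homomorphism into the permutation group of the vertices. -/
noncomputable def psi : (∀ i, Wreath (Equiv.Perm (Fin (m i) → Bool)) (k i)) →*
    Equiv.Perm (∀ c : CT k, AT k m c) where
  toFun g :=
    { toFun := psiFun k m g
      invFun := psiFun k m g⁻¹
      left_inv := fun v => by
        rw [← psiFun_mul, inv_mul_cancel, psiFun_one]
      right_inv := fun v => by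
        rw [← psiFun_mul, mul_inv_cancel, psiFun_one] }
  map_one' := Equiv.ext fun v => psiFun_one k m v
  map_mul' g g' := Equiv.ext fun v => psiFun_mul k m g g' v

lemma psi_adj (g : ∀ i, Wreath (Equiv.Perm (Fin (m i) → Bool)) (k i))
    {u v : ∀ c : CT k, AT k m c} (h : (HG (AT k m)).Adj u v) :
    (HG (AT k m)).Adj (psiFun k m g u) (psiFun k m g v) := by
  obtain ⟨⟨i, j⟩, h1, h2⟩ := h
  refine ⟨⟨i, (g i).right j⟩, ?_, ?_⟩
  · show (g i).left _ (u ⟨i, ((g i).right)⁻¹ ((g i).right j)⟩) ≠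
      (g i).left _ (v ⟨i, ((g i).right)⁻¹ ((g i).right j)⟩)
    rw [Equiv.Perm.inv_apply_self]
    exact fun he => h1 (((g i).left ((g i).right j)).injective he)
  · rintro ⟨i', j'⟩ hne
    show (g i').left _ (u ⟨i', ((g i').right)⁻¹ j'⟩) =
      (g i').left _ (v ⟨i', ((g i').right)⁻¹ j'⟩)
    have hd : (⟨i', ((g i').right)⁻¹ j'⟩ : CT k) ≠ ⟨i, j⟩ := by
      rintro he
      apply hne
      obtain ⟨he1, he2⟩ := Sigma.mk.inj_iff.mp he
      subst he1
      have he2' : ((g i').right)⁻¹ j' = j := eq_of_heq he2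
      have : j' = (g i').right j := by
        rw [← he2', Equiv.Perm.apply_inv_self]
      rw [this]
    rw [h2 _ hd]

lemma psi_mem (g : ∀ i, Wreath (Equiv.Perm (Fin (m i) → Bool)) (k i)) :
    psi k m g ∈ graphAut (HG (AT k m)) := by
  intro a b
  constructor
  · intro h
    have := psi_adj k m g⁻¹ h
    rwa [show psiFun k m g⁻¹ (psi k m g a) = a from (psi k m g).left_inv a,
      show psiFun k m g⁻¹ (psi k m g b) = b from (psi k m g).left_inv b] at this
  · exact psi_adj k m g

lemma psi_inj (h01 : ∀ i, m i = 0 → k i ≤ 1) :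
    Function.Injective (psi k m) := by
  rw [injective_iff_map_eq_one]
  intro g hg
  have hΨ : ∀ v (c : CT k), psiFun k m g v c = v c := fun v c =>
    congrFun (congrArg (fun (e : Equiv.Perm _) => e.toFun v) hg) c
  funext i
  by_cases hm0 : m i = 0
  · haveI : Subsingleton (Fin (m i) → Bool) := by
      rw [hm0]; exact ⟨fun a b => funext fun t => absurd t.2 (by omega)⟩
    haveI : Subsingleton (Fin (k i)) := by
      rcases Nat.le_one_iff_eq_zero_or_eq_one.mp (h01 i hm0) with h | h <;>
        rw [h] <;> infer_instance
    haveI i1 : Subsingleton (Equiv.Perm (Fin (m i) → Bool)) :=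
      ⟨fun a b => Equiv.ext fun x => Subsingleton.elim _ _⟩
    haveI i2 : Subsingleton (Equiv.Perm (Fin (k i))) :=
      ⟨fun a b => Equiv.ext fun x => Subsingleton.elim _ _⟩
    show g i = 1
    exact SemidirectProduct.ext (funext fun j => Subsingleton.elim _ _)
      (Subsingleton.elim _ _)
  · have hmpos : 0 < m i := Nat.pos_of_ne_zero hm0
    set v0 : ∀ c : CT k, AT k m c := fun _ _ => false with hv0
    have hx : (fun _ => false : Fin (m i) → Bool) ≠ (fun _ => true) := by
      intro he
      have := congrFun he ⟨0, hmpos⟩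
      simp at this
    have hr : ∀ j, ((g i).right)⁻¹ j = j := by
      intro j
      by_contra hne
      have hnemk : (⟨i, ((g i).right)⁻¹ j⟩ : CT k) ≠ ⟨i, j⟩ := fun hmk =>
        hne (eq_of_heq (Sigma.mk.inj_iff.mp hmk).2)
      have key : ∀ x : Fin (m i) → Bool, (g i).left j x = v0 ⟨i, j⟩ := by
        intro x
        have h : (g i).left j
            ((Function.update v0 ⟨i, ((g i).right)⁻¹ j⟩ x) ⟨i, ((g i).right)⁻¹ j⟩) =
            (Function.update v0 ⟨i, ((g i).right)⁻¹ j⟩ x) ⟨i, j⟩ :=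
          hΨ (Function.update v0 ⟨i, ((g i).right)⁻¹ j⟩ x) ⟨i, j⟩
        rwa [Function.update_self, Function.update_of_ne (Ne.symm hnemk)] at h
      have := (key (fun _ => false)).trans (key (fun _ => true)).symm
      exact hx (((g i).left j).injective this)
    have hright : (g i).right = 1 := by
      refine Equiv.ext fun j => ?_
      conv_lhs => rw [← hr j]
      exact Equiv.Perm.apply_inv_self (g i).right j
    have hleft : (g i).left = 1 := by
      funext j
      refine Equiv.ext fun y => ?_
      have h : (g i).left j
          ((Function.update v0 ⟨i, j⟩ y) ⟨i, ((g i).right)⁻¹ j⟩) =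
          (Function.update v0 ⟨i, j⟩ y) ⟨i, j⟩ :=
        hΨ (Function.update v0 ⟨i, j⟩ y) ⟨i, j⟩
      rw [hr j, Function.update_self] at h
      exact h
    show g i = 1
    exact SemidirectProduct.ext hleft hright

section Surj

lemma sig_recast (c : CT k) (i : Fin l) (h : c.1 = i) :
    c = ⟨i, Fin.cast (congrArg k h) c.2⟩ := by
  obtain ⟨i0, j0⟩ := c
  subst h
  rfl

lemma hfst_inv (σ : Equiv.Perm (CT k)) (hfst : ∀ c : CT k, (σ c).1 = c.1) :
    ∀ c : CT k, (σ⁻¹ c).1 = c.1 := fun c => by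
  have := hfst (σ⁻¹ c)
  rw [Equiv.Perm.apply_inv_self] at this
  exact this.symm

/-- The permutation of `Fin (k i)` induced by a first-component-preserving
permutation of coordinates. -/
def restrictPerm (σ : Equiv.Perm (CT k)) (hfst : ∀ c : CT k, (σ c).1 = c.1)
    (i : Fin l) : Equiv.Perm (Fin (k i)) where
  toFun j := Fin.cast (congrArg k (hfst ⟨i, j⟩)) (σ ⟨i, j⟩).2
  invFun j := Fin.cast (congrArg k (hfst_inv k σ hfst ⟨i, j⟩)) (σ⁻¹ ⟨i, j⟩).2
  left_inv j := by
    set jx := Fin.cast (congrArg k (hfst ⟨i, j⟩)) (σ ⟨i, j⟩).2 with hjx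
    have e2 : (⟨i, jx⟩ : CT k) = σ ⟨i, j⟩ :=
      (sig_recast k (σ ⟨i, j⟩) i (hfst ⟨i, j⟩)).symm
    have e1 : (⟨i, Fin.cast (congrArg k (hfst_inv k σ hfst ⟨i, jx⟩))
        (σ⁻¹ ⟨i, jx⟩).2⟩ : CT k) = σ⁻¹ ⟨i, jx⟩ :=
      (sig_recast k (σ⁻¹ ⟨i, jx⟩) i (hfst_inv k σ hfst ⟨i, jx⟩)).symm
    have e3 : (⟨i, Fin.cast (congrArg k (hfst_inv k σ hfst ⟨i, jx⟩))
        (σ⁻¹ ⟨i, jx⟩).2⟩ : CT k) = ⟨i, j⟩ := by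
      rw [e1, e2, Equiv.Perm.inv_apply_self]
    exact eq_of_heq (Sigma.mk.inj_iff.mp e3).2
  right_inv j := by
    set jx := Fin.cast (congrArg k (hfst_inv k σ hfst ⟨i, j⟩)) (σ⁻¹ ⟨i, j⟩).2 with hjx
    have e2 : (⟨i, jx⟩ : CT k) = σ⁻¹ ⟨i, j⟩ :=
      (sig_recast k (σ⁻¹ ⟨i, j⟩) i (hfst_inv k σ hfst ⟨i, j⟩)).symm
    have e1 : (⟨i, Fin.cast (congrArg k (hfst ⟨i, jx⟩))
        (σ ⟨i, jx⟩).2⟩ : CT k) = σ ⟨i, jx⟩ :=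
      (sig_recast k (σ ⟨i, jx⟩) i (hfst ⟨i, jx⟩)).symm
    have e3 : (⟨i, Fin.cast (congrArg k (hfst ⟨i, jx⟩))
        (σ ⟨i, jx⟩).2⟩ : CT k) = ⟨i, j⟩ := by
      rw [e1, e2, Equiv.Perm.apply_inv_self]
    exact eq_of_heq (Sigma.mk.inj_iff.mp e3).2

lemma restrictPerm_spec (σ : Equiv.Perm (CT k)) (hfst : ∀ c : CT k, (σ c).1 = c.1)
    (i : Fin l) (j : Fin (k i)) :
    σ ⟨i, j⟩ = ⟨i, restrictPerm k σ hfst i j⟩ :=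
  sig_recast k _ _ (hfst ⟨i, j⟩)

lemma restrictPerm_spec' (σ : Equiv.Perm (CT k)) (hfst : ∀ c : CT k, (σ c).1 = c.1)
    (i : Fin l) (j : Fin (k i)) :
    σ ⟨i, (restrictPerm k σ hfst i)⁻¹ j⟩ = ⟨i, j⟩ := by
  rw [restrictPerm_spec k σ hfst, Equiv.Perm.apply_inv_self]

end Surj

lemma cast_apply (w : ∀ c : CT k, AT k m c) {d d' : CT k} (h : d = d') :
    w d' = Equiv.cast (congrArg (AT k m) h) (w d) := by
  subst h
  rfl

lemma psi_surj (hm : Function.Injective m) (p : Equiv.Perm (∀ c : CT k, AT k m c))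
    (hp : p ∈ graphAut (HG (AT k m))) : ∃ g, psi k m g = p := by
  obtain ⟨σ, F, hF⟩ := HamAux.decomp (A := AT k m) (π := p) hp
  have hfst : ∀ c : CT k, (σ c).1 = c.1 := by
    intro c
    have hcard : Fintype.card (AT k m (σ c)) = Fintype.card (AT k m c) :=
      (Fintype.card_congr (F c)).symm
    have h2 : (2 : ℕ) ^ m (σ c).1 = 2 ^ m c.1 := by
      simpa [AT, Fintype.card_fun] using hcard
    exact hm (Nat.pow_right_injective le_rfl h2)
  set r := restrictPerm k σ hfst with hr
  refine ⟨fun i => ⟨fun j => (F ⟨i, (r i)⁻¹ j⟩).trans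
    (Equiv.cast (congrArg (AT k m) (restrictPerm_spec' k σ hfst i j))), r i⟩, ?_⟩
  refine Equiv.ext fun v => ?_
  funext c
  obtain ⟨i, j⟩ := c
  show ((F ⟨i, (r i)⁻¹ j⟩).trans
      (Equiv.cast (congrArg (AT k m) (restrictPerm_spec' k σ hfst i j))))
      (v ⟨i, (r i)⁻¹ j⟩) = p v ⟨i, j⟩
  have h1 : p v (σ ⟨i, (r i)⁻¹ j⟩) = F ⟨i, (r i)⁻¹ j⟩ (v ⟨i, (r i)⁻¹ j⟩) :=
    hF v ⟨i, (r i)⁻¹ j⟩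
  have h2 : p v ⟨i, j⟩ = Equiv.cast (congrArg (AT k m) (restrictPerm_spec' k σ hfst i j))
      (p v (σ ⟨i, (r i)⁻¹ j⟩)) :=
    cast_apply k m (p v) (restrictPerm_spec' k σ hfst i j)
  rw [h2, h1]
  rfl

end SpecAux

namespace SpecAux

/-- Transfer of graph automorphism groups along an isomorphism of graphs. -/
def graphAutCongr {V V' : Type*} (G : SimpleGraph V) (G' : SimpleGraph V') (e : V ≃ V')
    (he : ∀ u v, G'.Adj (e u) (e v) ↔ G.Adj u v) : graphAut G ≃* graphAut G' where
  toFun p := ⟨e.symm.trans (p.1.trans e), by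
    intro a b
    show G'.Adj (e (p.1 (e.symm a))) (e (p.1 (e.symm b))) ↔ G'.Adj a b
    rw [he, p.2]
    conv_rhs => rw [show a = e (e.symm a) by simp, show b = e (e.symm b) by simp]
    rw [he]⟩
  invFun q := ⟨e.trans (q.1.trans e.symm), by
    intro a b
    show G.Adj (e.symm (q.1 (e a))) (e.symm (q.1 (e b))) ↔ G.Adj a b
    have h1 : ∀ x y, G.Adj (e.symm x) (e.symm y) ↔ G'.Adj x y := by
      intro x y
      conv_rhs => rw [show x = e (e.symm x) by simp, show y = e (e.symm y) by simp]
      rw [he]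
    rw [h1, q.2, ← he]⟩
  left_inv p := Subtype.ext (Equiv.ext fun v => by simp)
  right_inv q := Subtype.ext (Equiv.ext fun v => by simp)
  map_mul' p q := Subtype.ext (Equiv.ext fun v => by simp)

variable {l : ℕ} (k m : Fin l → ℕ)

/-- The automorphism group of the Hamming graph is the product of wreath products. -/
noncomputable def hammingIso (hm : Function.Injective m) (h01 : ∀ i, m i = 0 → k i ≤ 1) :
    graphAut (HamAux.HG (AT k m)) ≃*
      (∀ i : Fin l, Wreath (Equiv.Perm (Fin (m i) → Bool)) (k i)) :=
  (MulEquiv.ofBijective ((psi k m).codRestrict (graphAut (HamAux.HG (AT k m))) (psi_mem k m))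
    ⟨fun a b h => psi_inj k m h01 (congrArg Subtype.val h),
     fun q => by
      obtain ⟨g, hg⟩ := psi_surj k m hm q.1 q.2
      exact ⟨g, Subtype.ext hg⟩⟩).symm

/-- Cardinality of a wreath product. -/
lemma card_wreath (G : Type*) [Group G] (kk : ℕ) :
    Nat.card (Wreath G kk) = (Nat.card G) ^ kk * kk.factorial := by
  have e : Wreath G kk ≃ (Fin kk → G) × Equiv.Perm (Fin kk) :=
    ⟨fun g => (g.left, g.right), fun p => ⟨p.1, p.2⟩,
     fun g => rfl, fun p => rfl⟩
  rw [Nat.card_congr e, Nat.card_prod, Nat.card_fun]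
  simp [Nat.card_eq_fintype_card, Fintype.card_perm]

lemma card_prod_wreath :
    Nat.card (∀ i : Fin l, Wreath (Equiv.Perm (Fin (m i) → Bool)) (k i)) =
      ∏ i : Fin l, ((2 ^ (m i)).factorial) ^ (k i) * (k i).factorial := by
  rw [Nat.card_pi]
  refine Finset.prod_congr rfl fun i _ => ?_
  rw [card_wreath]
  congr 2
  rw [Nat.card_eq_fintype_card, Fintype.card_perm, Fintype.card_fun]
  simp

end SpecAux

namespace SpecAux

section Blocks

variable {n l : ℕ} (k m : Fin l → ℕ)
variable (Wsub : Fin l → Finset (Finset (Fin n))) (W : Finset (Finset (Fin n)))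

/-- Enumeration of the blocks of cardinality `m i`. -/
noncomputable def eFin (hk : ∀ i, (Wsub i).card = k i) (i : Fin l) :
    Fin (k i) ≃ ↥(Wsub i) :=
  ((Wsub i).equivFin.trans (finCongr (hk i))).symm

/-- The block indexed by a coordinate. -/
noncomputable def blk (hk : ∀ i, (Wsub i).card = k i) (c : CT k) : Finset (Fin n) :=
  (eFin k Wsub hk c.1 c.2 : ↥(Wsub c.1))

lemma blk_mem (hk : ∀ i, (Wsub i).card = k i) (c : CT k) :
    blk k Wsub hk c ∈ Wsub c.1 := (eFin k Wsub hk c.1 c.2).2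

lemma blk_card (hk : ∀ i, (Wsub i).card = k i)
    (hcard : ∀ i, ∀ w ∈ Wsub i, w.card = m i) (c : CT k) :
    (blk k Wsub hk c).card = m c.1 :=
  hcard c.1 _ (blk_mem k Wsub hk c)

lemma blk_W (hW : W = Finset.univ.biUnion Wsub) (hk : ∀ i, (Wsub i).card = k i)
    (c : CT k) : blk k Wsub hk c ∈ W := by
  rw [hW]
  exact Finset.mem_biUnion.mpr ⟨c.1, Finset.mem_univ _, blk_mem k Wsub hk c⟩

lemma mem_W_iff (hW : W = Finset.univ.biUnion Wsub) (hk : ∀ i, (Wsub i).card = k i)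
    {w : Finset (Fin n)} (hw : w ∈ W) : ∃ c : CT k, blk k Wsub hk c = w := by
  rw [hW] at hw
  obtain ⟨i, -, hwi⟩ := Finset.mem_biUnion.mp hw
  refine ⟨⟨i, (eFin k Wsub hk i).symm ⟨w, hwi⟩⟩, ?_⟩
  show ((eFin k Wsub hk i) ((eFin k Wsub hk i).symm ⟨w, hwi⟩) : Finset (Fin n)) = w
  rw [Equiv.apply_symm_apply]

lemma blk_inj (hm : Function.Injective m) (hk : ∀ i, (Wsub i).card = k i)
    (hcard : ∀ i, ∀ w ∈ Wsub i, w.card = m i) :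
    Function.Injective (blk k Wsub hk) := by
  intro c c' h
  have h1 : c.1 = c'.1 := by
    apply hm
    rw [← blk_card k m Wsub hk hcard c, ← blk_card k m Wsub hk hcard c', h]
  obtain ⟨i, j⟩ := c
  obtain ⟨i', j'⟩ := c'
  obtain rfl : i = i' := h1
  obtain rfl : j = j' := (eFin k Wsub hk i).injective (Subtype.ext h)
  rfl

lemma blk_eq_of_mem (hm : Function.Injective m) (hW : W = Finset.univ.biUnion Wsub)
    (hk : ∀ i, (Wsub i).card = k i) (hcard : ∀ i, ∀ w ∈ Wsub i, w.card = m i)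
    (hpart : ∀ a : Fin n, ∃! w, w ∈ W ∧ a ∈ w)
    {a : Fin n} {c c' : CT k} (h : a ∈ blk k Wsub hk c)
    (h' : a ∈ blk k Wsub hk c') : c = c' := by
  obtain ⟨w, -, hu⟩ := hpart a
  have e1 := hu _ ⟨blk_W k Wsub W hW hk c, h⟩
  have e2 := hu _ ⟨blk_W k Wsub W hW hk c', h'⟩
  exact blk_inj k m Wsub hm hk hcard (e1.trans e2.symm)

lemma blk_cover (hW : W = Finset.univ.biUnion Wsub) (hk : ∀ i, (Wsub i).card = k i)
    (hpart : ∀ a : Fin n, ∃! w, w ∈ W ∧ a ∈ w) (a : Fin n) :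
    ∃ c : CT k, a ∈ blk k Wsub hk c := by
  obtain ⟨w, ⟨hwW, haw⟩, -⟩ := hpart a
  obtain ⟨c, rfl⟩ := mem_W_iff k Wsub W hW hk hwW
  exact ⟨c, haw⟩

/-- The block index of an agent. -/
noncomputable def bIdx (hW : W = Finset.univ.biUnion Wsub) (hk : ∀ i, (Wsub i).card = k i)
    (hpart : ∀ a : Fin n, ∃! w, w ∈ W ∧ a ∈ w) (a : Fin n) : CT k :=
  Classical.choose (blk_cover k Wsub W hW hk hpart a)

lemma bMem (hW : W = Finset.univ.biUnion Wsub) (hk : ∀ i, (Wsub i).card = k i)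
    (hpart : ∀ a : Fin n, ∃! w, w ∈ W ∧ a ∈ w) (a : Fin n) :
    a ∈ blk k Wsub hk (bIdx k Wsub W hW hk hpart a) :=
  Classical.choose_spec (blk_cover k Wsub W hW hk hpart a)

lemma bIdx_eq (hm : Function.Injective m) (hW : W = Finset.univ.biUnion Wsub)
    (hk : ∀ i, (Wsub i).card = k i) (hcard : ∀ i, ∀ w ∈ Wsub i, w.card = m i)
    (hpart : ∀ a : Fin n, ∃! w, w ∈ W ∧ a ∈ w)
    {a : Fin n} {c : CT k} (h : a ∈ blk k Wsub hk c) :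
    bIdx k Wsub W hW hk hpart a = c :=
  blk_eq_of_mem k m Wsub W hm hW hk hcard hpart (bMem k Wsub W hW hk hpart a) h

/-- Each block is in bijection with `Fin (m i)`. -/
noncomputable def bEquiv (hk : ∀ i, (Wsub i).card = k i)
    (hcard : ∀ i, ∀ w ∈ Wsub i, w.card = m i) (c : CT k) :
    ↥(blk k Wsub hk c) ≃ Fin (m c.1) :=
  (blk k Wsub hk c).equivFin.trans (finCongr (blk_card k m Wsub hk hcard c))

/-- The fibers of `bIdx` are the blocks. -/
noncomputable def fiberEquiv (hm : Function.Injective m) (hW : W = Finset.univ.biUnion Wsub)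
    (hk : ∀ i, (Wsub i).card = k i) (hcard : ∀ i, ∀ w ∈ Wsub i, w.card = m i)
    (hpart : ∀ a : Fin n, ∃! w, w ∈ W ∧ a ∈ w) (c : CT k) :
    {a : Fin n // bIdx k Wsub W hW hk hpart a = c} ≃ ↥(blk k Wsub hk c) where
  toFun x := ⟨x.1, by
    have h := bMem k Wsub W hW hk hpart x.1
    rw [x.2] at h
    exact h⟩
  invFun y := ⟨y.1, bIdx_eq k m Wsub W hm hW hk hcard hpart y.2⟩
  left_inv x := Subtype.ext rfl
  right_inv y := Subtype.ext rfl

/-- Agents are the disjoint union of the blocks. -/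
noncomputable def e0 (hm : Function.Injective m) (hW : W = Finset.univ.biUnion Wsub)
    (hk : ∀ i, (Wsub i).card = k i) (hcard : ∀ i, ∀ w ∈ Wsub i, w.card = m i)
    (hpart : ∀ a : Fin n, ∃! w, w ∈ W ∧ a ∈ w) : Fin n ≃ Σ c : CT k, Fin (m c.1) :=
  (Equiv.sigmaFiberEquiv (bIdx k Wsub W hW hk hpart)).symm.trans
    (Equiv.sigmaCongrRight fun c =>
      (fiberEquiv k m Wsub W hm hW hk hcard hpart c).trans
        (bEquiv k m Wsub hk hcard c))

lemma e0_fst (hm : Function.Injective m) (hW : W = Finset.univ.biUnion Wsub)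
    (hk : ∀ i, (Wsub i).card = k i) (hcard : ∀ i, ∀ w ∈ Wsub i, w.card = m i)
    (hpart : ∀ a : Fin n, ∃! w, w ∈ W ∧ a ∈ w) (a : Fin n) :
    (e0 k m Wsub W hm hW hk hcard hpart a).1 = bIdx k Wsub W hW hk hpart a := rfl

lemma e0_symm_apply (hm : Function.Injective m) (hW : W = Finset.univ.biUnion Wsub)
    (hk : ∀ i, (Wsub i).card = k i) (hcard : ∀ i, ∀ w ∈ Wsub i, w.card = m i)
    (hpart : ∀ a : Fin n, ∃! w, w ∈ W ∧ a ∈ w) (c : CT k) (t : Fin (m c.1)) :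
    (e0 k m Wsub W hm hW hk hcard hpart).symm ⟨c, t⟩ =
      ((bEquiv k m Wsub hk hcard c).symm t : ↥(blk k Wsub hk c)).1 := rfl

lemma e0_symm_mem (hm : Function.Injective m) (hW : W = Finset.univ.biUnion Wsub)
    (hk : ∀ i, (Wsub i).card = k i) (hcard : ∀ i, ∀ w ∈ Wsub i, w.card = m i)
    (hpart : ∀ a : Fin n, ∃! w, w ∈ W ∧ a ∈ w) (c : CT k) (t : Fin (m c.1)) :
    (e0 k m Wsub W hm hW hk hcard hpart).symm ⟨c, t⟩ ∈ blk k Wsub hk c := by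
  rw [e0_symm_apply]
  exact ((bEquiv k m Wsub hk hcard c).symm t).2

end Blocks

end SpecAux

namespace SpecAux

section Final

variable {n l : ℕ} (k m : Fin l → ℕ)
variable (Wsub : Fin l → Finset (Finset (Fin n))) (W : Finset (Finset (Fin n)))
variable (hm : Function.Injective m) (hW : W = Finset.univ.biUnion Wsub)
  (hk : ∀ i, (Wsub i).card = k i) (hcard : ∀ i, ∀ w ∈ Wsub i, w.card = m i)
  (hpart : ∀ a : Fin n, ∃! w, w ∈ W ∧ a ∈ w)

/-- The vertex sets correspond. -/
noncomputable def eV : (Fin n → Bool) ≃ (∀ c : CT k, AT k m c) where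
  toFun v := fun c t => v ((e0 k m Wsub W hm hW hk hcard hpart).symm ⟨c, t⟩)
  invFun f := fun a => f (e0 k m Wsub W hm hW hk hcard hpart a).1
    (e0 k m Wsub W hm hW hk hcard hpart a).2
  left_inv v := funext fun a => by
    show v ((e0 k m Wsub W hm hW hk hcard hpart).symm
      ⟨(e0 k m Wsub W hm hW hk hcard hpart a).1,
       (e0 k m Wsub W hm hW hk hcard hpart a).2⟩) = v a
    rw [Sigma.eta, Equiv.symm_apply_apply]
  right_inv f := funext fun c => funext fun t => by
    have h := (e0 k m Wsub W hm hW hk hcard hpart).apply_symm_apply ⟨c, t⟩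
    show f (e0 k m Wsub W hm hW hk hcard hpart
        ((e0 k m Wsub W hm hW hk hcard hpart).symm ⟨c, t⟩)).1
      (e0 k m Wsub W hm hW hk hcard hpart
        ((e0 k m Wsub W hm hW hk hcard hpart).symm ⟨c, t⟩)).2 = f c t
    rw [h]

/-- The graphs correspond. -/
lemma adj_compat (u v : Fin n → Bool) :
    (HamAux.HG (AT k m)).Adj (eV k m Wsub W hm hW hk hcard hpart u)
      (eV k m Wsub W hm hW hk hcard hpart v) ↔ (KM W).Adj u v := by
  constructor
  · rintro ⟨c, hne, hout⟩
    refine ⟨blk k Wsub hk c, blk_W k Wsub W hW hk c, ?_, ?_⟩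
    · obtain ⟨t, ht⟩ := Function.ne_iff.mp hne
      exact ⟨(e0 k m Wsub W hm hW hk hcard hpart).symm ⟨c, t⟩,
        e0_symm_mem k m Wsub W hm hW hk hcard hpart c t, ht⟩
    · intro a hna
      have hbne : bIdx k Wsub W hW hk hpart a ≠ c := by
        intro h
        apply hna
        have := bMem k Wsub W hW hk hpart a
        rwa [h] at this
      have h2 := hout (bIdx k Wsub W hW hk hpart a) hbne
      have h3 := congrFun h2 (e0 k m Wsub W hm hW hk hcard hpart a).2
      have h4 : (e0 k m Wsub W hm hW hk hcard hpart).symm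
          ⟨bIdx k Wsub W hW hk hpart a, (e0 k m Wsub W hm hW hk hcard hpart a).2⟩ = a := by
        show (e0 k m Wsub W hm hW hk hcard hpart).symm
          ⟨(e0 k m Wsub W hm hW hk hcard hpart a).1,
           (e0 k m Wsub W hm hW hk hcard hpart a).2⟩ = a
        rw [Sigma.eta, Equiv.symm_apply_apply]
      calc u a = u ((e0 k m Wsub W hm hW hk hcard hpart).symm
            ⟨bIdx k Wsub W hW hk hpart a, (e0 k m Wsub W hm hW hk hcard hpart a).2⟩) := by
              rw [h4]
        _ = v ((e0 k m Wsub W hm hW hk hcard hpart).symm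
            ⟨bIdx k Wsub W hW hk hpart a, (e0 k m Wsub W hm hW hk hcard hpart a).2⟩) := h3
        _ = v a := by rw [h4]
  · rintro ⟨w, hwW, ⟨a, haw, hne⟩, hout⟩
    obtain ⟨c, rfl⟩ := mem_W_iff k Wsub W hW hk hwW
    refine ⟨c, ?_, ?_⟩
    · intro heq
      apply hne
      have ht : (e0 k m Wsub W hm hW hk hcard hpart).symm
          ⟨c, bEquiv k m Wsub hk hcard c ⟨a, haw⟩⟩ = a := by
        rw [e0_symm_apply, Equiv.symm_apply_apply]
      have h5 : u ((e0 k m Wsub W hm hW hk hcard hpart).symm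
          ⟨c, bEquiv k m Wsub hk hcard c ⟨a, haw⟩⟩) =
          v ((e0 k m Wsub W hm hW hk hcard hpart).symm
          ⟨c, bEquiv k m Wsub hk hcard c ⟨a, haw⟩⟩) :=
        congrFun heq (bEquiv k m Wsub hk hcard c ⟨a, haw⟩)
      rwa [ht] at h5
    · intro d hdc
      funext t
      show u ((e0 k m Wsub W hm hW hk hcard hpart).symm ⟨d, t⟩) =
        v ((e0 k m Wsub W hm hW hk hcard hpart).symm ⟨d, t⟩)
      refine hout _ ?_
      intro hmem
      exact hdc (blk_eq_of_mem k m Wsub W hm hW hk hcard hpart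
        (e0_symm_mem k m Wsub W hm hW hk hcard hpart d t) hmem)

lemma h01' (hk : ∀ i, (Wsub i).card = k i) (hcard : ∀ i, ∀ w ∈ Wsub i, w.card = m i) :
    ∀ i, m i = 0 → k i ≤ 1 := by
  intro i h0
  rw [← hk i]
  refine Finset.card_le_one.mpr ?_
  intro w hw w' hw'
  have h1 : w = ∅ := Finset.card_eq_zero.mp (by rw [hcard i w hw, h0])
  have h2 : w' = ∅ := Finset.card_eq_zero.mp (by rw [hcard i w' hw', h0])
  rw [h1, h2]

end Final

end SpecAux

theorem mode_preserving_group_iso_prod_wreath {n l : ℕ}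
    (k m : Fin l → ℕ) (hm : Function.Injective m)
    (Wsub : Fin l → Finset (Finset (Fin n)))
    (W : Finset (Finset (Fin n)))
    (hW : W = Finset.univ.biUnion Wsub)
    (hk : ∀ i, (Wsub i).card = k i)
    (hcard : ∀ i, ∀ w ∈ Wsub i, w.card = m i)
    (hpart : ∀ a : Fin n, ∃! w, w ∈ W ∧ a ∈ w) :
    Nonempty (graphAut (KM W) ≃*
      (∀ i : Fin l, Wreath (Equiv.Perm (Fin (m i) → Bool)) (k i))) ∧
    Nat.card (graphAut (KM W)) =
      ∏ i : Fin l, ((2 ^ (m i)).factorial) ^ (k i) * (k i).factorial := by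
  have h01 := SpecAux.h01' k m Wsub hk hcard
  have iso : graphAut (KM W) ≃*
      (∀ i : Fin l, Wreath (Equiv.Perm (Fin (m i) → Bool)) (k i)) :=
    (SpecAux.graphAutCongr (KM W) (HamAux.HG (SpecAux.AT k m))
      (SpecAux.eV k m Wsub W hm hW hk hcard hpart)
      (SpecAux.adj_compat k m Wsub W hm hW hk hcard hpart)).trans
    (SpecAux.hammingIso k m hm h01)
  refine ⟨⟨iso⟩, ?_⟩
  rw [Nat.card_congr iso.toEquiv, SpecAux.card_prod_wreath]
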